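/- (A priori error estimate for gradient-preserving hyper-reduction, fixed parameter.) Let t0 < T, N, k, d, m be positive integers, L ∈ ℝ^{2N×2N}, f ∈ ℝ^{2N}, c ∈ ℝ^d. Let G : ℝ^{2N} → ℝ^d be continuously differentiable with Jacobian J_G, set h(x) := cᵀG(x), so ∇h(x) = J_G(x)ᵀ c. Let A ∈ ℝ^{2N×2k} satisfy AᵀA = I_{2k} and Aᵀ J_{2N} A = J_{2k}. Let U ∈ ℝ^{d×m} have orthonormal columns, P ∈ ℝ^{d×m} a column selection matrix with PᵀU invertible, and ℙ := U(PᵀU)^{-1}Pᵀ. Let y : [t0,T] → ℝ^{2N} be differentiable with y'(t) = J_{2N}(L y(t) + f + ∇h(y(t))) for all t, and let ẑ : [t0,T] → ℝ^{2k} be differentiable with ẑ'(t) = J_{2k}(AᵀLA ẑ(t) + Aᵀf + Aᵀ J_G(A ẑ(t))ᵀ ℙᵀ c) for all t and ẑ(t0) = Aᵀ y(t0). Assume: (i) ∇h is Lipschitz with constant L_h; (ii) ‖J_G(x) − J_G(x')‖₂ ≤ L_G ‖x − x'‖ for all x, x'; (iii) μ ∈ ℝ satisfies xᵀ (J_{2N}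 L) x ≤ μ ‖x‖² for all x ∈ ℝ^{2N}. Define K := J_{2N} L, α := ‖Aᵀ K‖₂ + L_h, β := μ + L_G ‖(PᵀU)^{-1}‖₂ ‖c‖, and C(T) := (e^{2β(T−t0)} − 1)/β if β ≠ 0, C(T) := 2(T − t0) if β = 0. Then ∫_{t0}^{T} ‖y(t) − A ẑ(t)‖² dt ≤ ((T − t0) C(T) α² + 1) ∫_{t0}^{T} ‖y(t) − A Aᵀ y(t)‖² dt + (T − t0) ‖c‖² C(T) ∫_{t0}^{T} ‖(I − ℙ) J_G(A Aᵀ y(t)) A‖₂² dt. -/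

import Mathlib

set_option linter.unusedSectionVars false
set_option maxHeartbeats 1000000


open Matrix
open scoped RealInnerProductSpace

/-- The Euclidean (2-) norm of a real vector. -/
noncomputable def enorm {ι : Type*} [Fintype ι] (v : ι → ℝ) : ℝ :=
  Real.sqrt (∑ i, (v i) ^ 2)

/-- The squared Frobenius norm of a real matrix. -/
noncomputable def frobSq {ι κ : Type*} [Fintype ι] [Fintype κ] (M : Matrix ι κ ℝ) : ℝ :=
  ∑ i, ∑ j, (M i j) ^ 2

/-- The Frobenius norm of a real matrix. -/
noncomputable def frobNorm {ι κ : Type*} [Fintype ι] [Fintype κ] (M : Matrix ι κ ℝ) : ℝ :=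
  Real.sqrt (frobSq M)

/-- The spectral (operator 2-) norm of a real matrix. -/
noncomputable def specNorm {ι κ : Type*} [Fintype ι] [Fintype κ] [DecidableEq κ]
    (M : Matrix ι κ ℝ) : ℝ :=
  ‖LinearMap.toContinuousLinearMap (Matrix.toEuclideanLin M)‖

/-- Matrix-vector multiplication as a map between Euclidean spaces. -/
noncomputable def mulVecE {ι κ : Type*} [Fintype ι] [Fintype κ] [DecidableEq κ]
    (M : Matrix ι κ ℝ) (v : EuclideanSpace ℝ κ) : EuclideanSpace ℝ ι :=
  Matrix.toEuclideanLin M v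

/-- A matrix as a continuous linear map between Euclidean spaces. -/
noncomputable def toCLM {ι κ : Type*} [Fintype ι] [Fintype κ] [DecidableEq κ]
    (M : Matrix ι κ ℝ) : EuclideanSpace ℝ κ →L[ℝ] EuclideanSpace ℝ ι :=
  LinearMap.toContinuousLinearMap (Matrix.toEuclideanLin M)

/-- The canonical Poisson (symplectic) matrix `J = [[0, I], [-I, 0]]` of size `2n × 2n`. -/
noncomputable def Jmat (n : ℕ) : Matrix (Fin n ⊕ Fin n) (Fin n ⊕ Fin n) ℝ :=
  Matrix.fromBlocks 0 1 (-1) 0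

/-- A column selection matrix: its columns are distinct standard basis vectors. -/
def IsSelection {a b : ℕ} (P : Matrix (Fin a) (Fin b) ℝ) : Prop :=
  ∃ β : Fin b → Fin a, Function.Injective β ∧ ∀ i j, P i j = if i = β j then 1 else 0

section API

variable {ι κ ρ : Type*} [Fintype ι] [Fintype κ] [Fintype ρ]
  [DecidableEq ι] [DecidableEq κ] [DecidableEq ρ]

lemma toCLM_apply (M : Matrix ι κ ℝ) (v : EuclideanSpace ℝ κ) : toCLM M v = mulVecE M v := rfl

lemma mulVecE_apply (M : Matrix ι κ ℝ) (v : EuclideanSpace ℝ κ) (i : ι) :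
    mulVecE M v i = ∑ j, M i j * v j := by
  rfl

lemma mulVecE_add (M : Matrix ι κ ℝ) (u v : EuclideanSpace ℝ κ) :
    mulVecE M (u + v) = mulVecE M u + mulVecE M v := map_add _ u v

lemma mulVecE_sub (M : Matrix ι κ ℝ) (u v : EuclideanSpace ℝ κ) :
    mulVecE M (u - v) = mulVecE M u - mulVecE M v := map_sub _ u v

lemma matSub_mulVecE (M N : Matrix ι κ ℝ) (v : EuclideanSpace ℝ κ) :
    mulVecE (M - N) v = mulVecE M v - mulVecE N v := by
  ext i; simp [mulVecE_apply, sub_mul, Finset.sum_sub_distrib]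

lemma mulVecE_mulVecE (M : Matrix ι κ ℝ) (N : Matrix κ ρ ℝ) (v : EuclideanSpace ℝ ρ) :
    mulVecE (M * N) v = mulVecE M (mulVecE N v) := by
  ext i
  simp only [mulVecE_apply, Matrix.mul_apply, Finset.sum_mul, Finset.mul_sum]
  rw [Finset.sum_comm]
  exact Finset.sum_congr rfl fun j _ => Finset.sum_congr rfl fun l _ => by ring

lemma mulVecE_one (v : EuclideanSpace ℝ ι) : mulVecE (1 : Matrix ι ι ℝ) v = v := by
  ext i; simp [mulVecE_apply, Matrix.one_apply]

lemma inner_mulVecE_left (M : Matrix ι κ ℝ) (u : EuclideanSpace ℝ κ) (v : EuclideanSpace ℝ ι) :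
    ⟪mulVecE M u, v⟫ = ⟪u, mulVecE Mᵀ v⟫ := by
  simp only [PiLp.inner_apply, RCLike.inner_apply, conj_trivial, mulVecE_apply,
    Matrix.transpose_apply, Finset.sum_mul, Finset.mul_sum]
  rw [Finset.sum_comm]
  exact Finset.sum_congr rfl fun j _ => Finset.sum_congr rfl fun i _ => by ring

lemma norm_mulVecE_le (M : Matrix ι κ ℝ) (v : EuclideanSpace ℝ κ) :
    ‖mulVecE M v‖ ≤ specNorm M * ‖v‖ := (toCLM M).le_opNorm v

lemma specNorm_nonneg (M : Matrix ι κ ℝ) : 0 ≤ specNorm M := norm_nonneg _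

lemma specNorm_le_bound (M : Matrix ι κ ℝ) {a : ℝ} (ha : 0 ≤ a)
    (h : ∀ v, ‖mulVecE M v‖ ≤ a * ‖v‖) : specNorm M ≤ a :=
  ContinuousLinearMap.opNorm_le_bound _ ha h

lemma specNorm_mul_le (M : Matrix ι κ ℝ) (N : Matrix κ ρ ℝ) :
    specNorm (M * N) ≤ specNorm M * specNorm N := by
  refine specNorm_le_bound _ (mul_nonneg (specNorm_nonneg M) (specNorm_nonneg N)) fun v => ?_
  rw [mulVecE_mulVecE]
  calc ‖mulVecE M (mulVecE N v)‖ ≤ specNorm M * ‖mulVecE N v‖ := norm_mulVecE_le _ _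
    _ ≤ specNorm M * (specNorm N * ‖v‖) :=
        mul_le_mul_of_nonneg_left (norm_mulVecE_le _ _) (specNorm_nonneg M)
    _ = specNorm M * specNorm N * ‖v‖ := by ring

lemma norm_mulVecE_orth {M : Matrix ι κ ℝ} (h : Mᵀ * M = 1) (v : EuclideanSpace ℝ κ) :
    ‖mulVecE M v‖ = ‖v‖ := by
  have h1 : ‖mulVecE M v‖ ^ 2 = ‖v‖ ^ 2 := by
    rw [← real_inner_self_eq_norm_sq, ← real_inner_self_eq_norm_sq, inner_mulVecE_left,
      ← mulVecE_mulVecE, h, mulVecE_one]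
  have h2 := congrArg Real.sqrt h1
  rwa [Real.sqrt_sq (norm_nonneg _), Real.sqrt_sq (norm_nonneg _)] at h2

lemma specNorm_le_one_orth {M : Matrix ι κ ℝ} (h : Mᵀ * M = 1) : specNorm M ≤ 1 :=
  specNorm_le_bound _ zero_le_one fun v => by rw [norm_mulVecE_orth h, one_mul]

lemma specNorm_transpose_le (M : Matrix ι κ ℝ) : specNorm Mᵀ ≤ specNorm M := by
  refine specNorm_le_bound _ (specNorm_nonneg M) fun v => ?_
  rcases eq_or_lt_of_le (norm_nonneg (mulVecE Mᵀ v)) with h0 | h0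
  · rw [← h0]; exact mul_nonneg (specNorm_nonneg M) (norm_nonneg v)
  · have h1 : ‖mulVecE Mᵀ v‖ ^ 2 = ⟪v, mulVecE M (mulVecE Mᵀ v)⟫ := by
      rw [← real_inner_self_eq_norm_sq, inner_mulVecE_left, Matrix.transpose_transpose,
        real_inner_comm]
    have h2 : ⟪v, mulVecE M (mulVecE Mᵀ v)⟫ ≤ ‖v‖ * (specNorm M * ‖mulVecE Mᵀ v‖) :=
      le_trans (real_inner_le_norm _ _)
        (mul_le_mul_of_nonneg_left (norm_mulVecE_le _ _) (norm_nonneg v))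
    have h4 := h1 ▸ h2
    have h3 : ‖mulVecE Mᵀ v‖ * ‖mulVecE Mᵀ v‖ ≤ specNorm M * ‖v‖ * ‖mulVecE Mᵀ v‖ := by
      nlinarith [h4]
    exact le_of_mul_le_mul_right h3 h0

lemma specNorm_transpose (M : Matrix ι κ ℝ) : specNorm Mᵀ = specNorm M :=
  le_antisymm (specNorm_transpose_le M)
    (by simpa [Matrix.transpose_transpose] using specNorm_transpose_le Mᵀ)

lemma eq_zero_of_transpose_mul_self {M : Matrix ι κ ℝ} (h : Mᵀ * M = 0) : M = 0 := by
  ext i j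
  have hj := congrFun (congrFun h j) j
  simp only [Matrix.mul_apply, Matrix.transpose_apply, Matrix.zero_apply] at hj
  have := (Finset.sum_eq_zero_iff_of_nonneg fun i _ => mul_self_nonneg (M i j)).mp hj i
    (Finset.mem_univ i)
  simpa using mul_self_eq_zero.mp this

end API

lemma Jmat_transpose (n : ℕ) : (Jmat n)ᵀ = -Jmat n := by
  rw [Jmat, Matrix.fromBlocks_transpose, Matrix.fromBlocks_neg]
  simp

lemma Jmat_mul_Jmat (n : ℕ) : Jmat n * Jmat n = -1 := by
  rw [Jmat, Matrix.fromBlocks_multiply, ← Matrix.fromBlocks_one, Matrix.fromBlocks_neg]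
  simp

lemma Jmat_tr_mul (n : ℕ) : (Jmat n)ᵀ * Jmat n = 1 := by
  rw [Jmat_transpose, Matrix.neg_mul, Jmat_mul_Jmat, neg_neg]

lemma Jmat_mul_tr (n : ℕ) : Jmat n * (Jmat n)ᵀ = 1 := by
  rw [Jmat_transpose, Matrix.mul_neg, Jmat_mul_Jmat, neg_neg]

section Symp
variable {N k : ℕ} {A : Matrix (Fin N ⊕ Fin N) (Fin k ⊕ Fin k) ℝ}

lemma JA_eq_AJ (hA1 : Aᵀ * A = 1) (hA2 : Aᵀ * Jmat N * A = Jmat k) :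
    Jmat N * A = A * Jmat k := by
  set B := Jmat N * A - A * Jmat k with hB
  have key : Bᵀ * B = 0 := by
    have e1 : Bᵀ * B
        = Aᵀ * ((Jmat N)ᵀ * Jmat N) * A - (Aᵀ * (Jmat N)ᵀ * A) * Jmat k
          - (Jmat k)ᵀ * (Aᵀ * Jmat N * A) + (Jmat k)ᵀ * (Aᵀ * A) * Jmat k := by
      simp only [hB, Matrix.transpose_sub, Matrix.transpose_mul, Matrix.sub_mul,
        Matrix.mul_sub, Matrix.mul_assoc]
      abel
    rw [e1, Jmat_tr_mul, Matrix.mul_one, hA1, hA2, Jmat_transpose, Jmat_transpose,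
      Matrix.mul_neg, Matrix.neg_mul, Matrix.neg_mul, Matrix.neg_mul, Matrix.mul_one,
      Jmat_mul_Jmat, hA2]
    simp
  have hB0 := eq_zero_of_transpose_mul_self key
  rw [hB] at hB0
  exact sub_eq_zero.mp hB0

lemma AtJ_eq_JkAt (hA1 : Aᵀ * A = 1) (hA2 : Aᵀ * Jmat N * A = Jmat k) :
    Aᵀ * Jmat N = Jmat k * Aᵀ := by
  have h := congrArg Matrix.transpose (JA_eq_AJ hA1 hA2)
  simp only [Matrix.transpose_mul, Jmat_transpose] at h
  -- h : Aᵀ * (-Jmat N) = (-Jmat k) * Aᵀ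
  have := congrArg Neg.neg h
  simpa [Matrix.mul_neg, Matrix.neg_mul] using this

lemma JtA_eq (hA1 : Aᵀ * A = 1) (hA2 : Aᵀ * Jmat N * A = Jmat k) :
    (Jmat N)ᵀ * A = A * (Jmat k)ᵀ := by
  rw [Jmat_transpose, Jmat_transpose, Matrix.neg_mul, Matrix.mul_neg, JA_eq_AJ hA1 hA2]

end Symp

lemma selection_tr_mul {a b : ℕ} {P : Matrix (Fin a) (Fin b) ℝ} (hP : IsSelection P) :
    Pᵀ * P = 1 := by
  obtain ⟨β, hβ, hPij⟩ := hP
  ext j j'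
  simp only [Matrix.mul_apply, Matrix.transpose_apply, hPij, Matrix.one_apply]
  rcases eq_or_ne j j' with rfl | hne
  · simp [Finset.sum_ite_eq]
  · have : ∀ i, (if i = β j then (1:ℝ) else 0) * (if i = β j' then 1 else 0) = 0 := by
      intro i
      rcases eq_or_ne i (β j) with rfl | h
      · have : β j ≠ β j' := fun h' => hne (hβ h')
        simp [this]
      · simp [h]
    simp [this, hne]

section Cont
variable {ι κ : Type*} [Fintype ι] [Fintype κ] [DecidableEq ι] [DecidableEq κ]

lemma continuous_specNorm : Continuous fun M : Matrix ι κ ℝ => specNorm M := by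
  have hΦ : Continuous fun M : Matrix ι κ ℝ =>
      (LinearMap.toContinuousLinearMap (Matrix.toEuclideanLin M) :
        EuclideanSpace ℝ κ →L[ℝ] EuclideanSpace ℝ ι) := by
    exact LinearMap.continuous_of_finiteDimensional
      ((LinearMap.toContinuousLinearMap.toLinearMap).comp
        (Matrix.toEuclideanLin :
          Matrix ι κ ℝ ≃ₗ[ℝ] (EuclideanSpace ℝ κ →ₗ[ℝ] EuclideanSpace ℝ ι)).toLinearMap)
  exact continuous_norm.comp hΦ

lemma hasDerivAt_mulVecE {y : ℝ → EuclideanSpace ℝ κ} {y' : EuclideanSpace ℝ κ} {t : ℝ}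
    (M : Matrix ι κ ℝ) (h : HasDerivAt y y' t) :
    HasDerivAt (fun s => mulVecE M (y s)) (mulVecE M y') t :=
  (toCLM M).hasFDerivAt.comp_hasDerivAt t h

end Cont

open intervalIntegral MeasureTheory in
lemma integral_CS {a b : ℝ} (hab : a ≤ b) {F G : ℝ → ℝ}
    (hF : ContinuousOn F (Set.Icc a b)) (hG : ContinuousOn G (Set.Icc a b)) :
    (∫ s in a..b, F s * G s) ^ 2 ≤ (∫ s in a..b, F s ^ 2) * (∫ s in a..b, G s ^ 2) := by
  have hu : Set.uIcc a b = Set.Icc a b := Set.uIcc_of_le hab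
  have iF2 : IntervalIntegrable (fun s => F s ^ 2) volume a b :=
    ((hF.pow 2).mono hu.subset).intervalIntegrable
  have iG2 : IntervalIntegrable (fun s => G s ^ 2) volume a b :=
    ((hG.pow 2).mono hu.subset).intervalIntegrable
  have iFG : IntervalIntegrable (fun s => F s * G s) volume a b :=
    ((hF.mul hG).mono hu.subset).intervalIntegrable
  have key : ∀ x : ℝ, 0 ≤ (∫ s in a..b, F s ^ 2) * (x * x)
      + (-2 * ∫ s in a..b, F s * G s) * x + (∫ s in a..b, G s ^ 2) := by
    intro x
    have expand : (∫ s in a..b, F s ^ 2) * (x * x)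
        + (-2 * ∫ s in a..b, F s * G s) * x + (∫ s in a..b, G s ^ 2)
        = ∫ s in a..b, (x * F s - G s) ^ 2 := by
      have : ∀ s, (x * F s - G s) ^ 2
          = (x * x) * F s ^ 2 + (-2 * x) * (F s * G s) + G s ^ 2 := by intro s; ring
      rw [intervalIntegral.integral_congr (fun s _ => this s)]
      rw [intervalIntegral.integral_add ((iF2.const_mul _).add (iFG.const_mul _)) iG2,
        intervalIntegral.integral_add (iF2.const_mul _) (iFG.const_mul _),
        intervalIntegral.integral_const_mul, intervalIntegral.integral_const_mul]
      ring
    rw [expand]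
    exact intervalIntegral.integral_nonneg hab fun s _ => sq_nonneg _
  have hd := discrim_le_zero key
  simp only [discrim] at hd
  nlinarith [hd]

open intervalIntegral in
lemma integral_exp_decay (c t0 t : ℝ) (hc : c ≠ 0) :
    (∫ s in t0..t, Real.exp (c * (t - s))) = (Real.exp (c * (t - t0)) - 1) / c := by
  have h : ∀ s ∈ Set.uIcc t0 t, HasDerivAt (fun u => -Real.exp (c * (t - u)) / c)
      (Real.exp (c * (t - s))) s := by
    intro s _
    have h1 : HasDerivAt (fun u : ℝ => c * (t - u)) (-c) s := by
      simpa using ((hasDerivAt_id s).const_sub t).const_mul c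
    have h2 := h1.exp
    have h3 := (h2.neg).div_const c
    have h4 : -(Real.exp (c * (t - s)) * -c) / c = Real.exp (c * (t - s)) := by
      rw [div_eq_iff hc]; ring
    rw [h4] at h3
    exact h3
  have hint : IntervalIntegrable (fun s => Real.exp (c * (t - s))) MeasureTheory.volume t0 t :=
    (Continuous.intervalIntegrable (Real.continuous_exp.comp
      (continuous_const.mul (continuous_const.sub continuous_id)))) _ _
  rw [intervalIntegral.integral_eq_sub_of_hasDerivAt h hint]
  field_simp [Real.exp_ne_zero]
  ring_nf
  simp

open scoped RealInnerProductSpace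


open intervalIntegral MeasureTheory in
lemma gronwall_L2 {t0 T beta : ℝ} (hT : t0 ≤ T) {H : Type*}
    [NormedAddCommGroup H] [InnerProductSpace ℝ H]
    {w wd : ℝ → H} {g : ℝ → ℝ}
    (hw : ∀ t ∈ Set.Icc t0 T, HasDerivAt w (wd t) t)
    (hw0 : w t0 = 0)
    (hg : ContinuousOn g (Set.Icc t0 T))
    (hgnn : ∀ t ∈ Set.Icc t0 T, 0 ≤ g t)
    (hineq : ∀ t ∈ Set.Icc t0 T, (inner ℝ (w t) (wd t) : ℝ) ≤ beta * ‖w t‖ ^ 2 + g t * ‖w t‖) :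
    ∀ t ∈ Set.Icc t0 T, ‖w t‖ ≤ ∫ s in t0..t, Real.exp (beta * (t - s)) * g s := by
  intro t htmem
  obtain ⟨ht0, htT⟩ := htmem
  set Eb := Real.exp (|beta| * (T - t0)) with hEb
  have hEbpos : 0 < Eb := Real.exp_pos _
  set K := Eb * (1 + |beta| * (T - t0)) with hK
  have hKpos : 0 < K := by
    apply mul_pos hEbpos
    have : 0 ≤ |beta| * (T - t0) := mul_nonneg (abs_nonneg _) (by linarith)
    linarith
  refine le_of_forall_pos_le_add fun ε hε => ?_
  set sδ := ε / K with hsδ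
  have hsδpos : 0 < sδ := div_pos hε hKpos
  set δ := sδ ^ 2 with hδ
  have hδpos : 0 < δ := by positivity
  have hsqrtδ : Real.sqrt δ = sδ := by rw [hδ, Real.sqrt_sq hsδpos.le]
  set q : ℝ → ℝ := fun s => Real.exp (-(beta * s)) * (g s + |beta| * sδ) with hq
  have hqcont : ContinuousOn q (Set.Icc t0 T) := by
    apply ContinuousOn.mul
    · exact (Real.continuous_exp.comp (continuous_const.mul continuous_id).neg).continuousOn
    · exact hg.add continuousOn_const
  set m : ℝ → ℝ := fun u => Real.sqrt ((inner ℝ (w u) (w u) : ℝ) + δ) with hm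
  set V : ℝ → ℝ := fun u =>
    Real.exp (beta * u) * (sδ * Real.exp (-(beta * t0)) + ∫ s in t0..u, q s) with hV
  set φ : ℝ → ℝ := fun u => Real.exp (-(beta * u)) * (m u - V u) with hφ
  have hwc : ContinuousOn w (Set.Icc t0 T) :=
    fun s hs => ((hw s hs).continuousAt).continuousWithinAt
  have hinner_nn : ∀ u, (0:ℝ) ≤ (inner ℝ (w u) (w u) : ℝ) := fun u => real_inner_self_nonneg
  have hmpos : ∀ u, 0 < m u := fun u => Real.sqrt_pos.mpr (by nlinarith [hinner_nn u])
  have hwle : ∀ u, ‖w u‖ ≤ m u := by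
    intro u
    have h1 : ‖w u‖ = Real.sqrt ((inner ℝ (w u) (w u) : ℝ)) := by
      rw [real_inner_self_eq_norm_sq]; exact (Real.sqrt_sq (norm_nonneg _)).symm
    rw [hm, h1]
    exact Real.sqrt_le_sqrt (by linarith)
  have hsδle : ∀ u, sδ ≤ m u := by
    intro u; rw [hm, ← hsqrtδ]
    exact Real.sqrt_le_sqrt (by nlinarith [hinner_nn u])
  have hmsq : ∀ u, m u ^ 2 = ‖w u‖ ^ 2 + δ := by
    intro u
    rw [hm, Real.sq_sqrt (by nlinarith [hinner_nn u]), real_inner_self_eq_norm_sq]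
  have hmd : ∀ u ∈ Set.Icc t0 T, HasDerivAt m
      ((((inner ℝ (w u) (wd u) : ℝ) + (inner ℝ (wd u) (w u) : ℝ)) + 0) / (2 * m u)) u := by
    intro u hu
    have h1 := (HasDerivAt.inner ℝ (hw u hu) (hw u hu)).add_const δ
    have h2 := h1.sqrt (by nlinarith [hinner_nn u])
    simpa [hm] using h2
  have hmd_le : ∀ u ∈ Set.Icc t0 T,
      (((inner ℝ (w u) (wd u) : ℝ) + (inner ℝ (wd u) (w u) : ℝ)) + 0) / (2 * m u)
        ≤ beta * m u + (g u + |beta| * sδ) := by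
    intro u hu
    have hI := hineq u hu
    have hcomm : (inner ℝ (wd u) (w u) : ℝ) = (inner ℝ (w u) (wd u) : ℝ) := real_inner_comm _ _
    rw [hcomm, add_zero, div_le_iff₀ (by have := hmpos u; linarith)]
    have hb2 : beta * ‖w u‖ ^ 2 = beta * (m u ^ 2) - beta * δ := by rw [hmsq u]; ring
    have hint1 : 0 ≤ (m u - sδ) * (|beta| * sδ) :=
      mul_nonneg (by linarith [hsδle u]) (mul_nonneg (abs_nonneg _) hsδpos.le)
    have hint2 : 0 ≤ g u * (m u - ‖w u‖) :=
      mul_nonneg (hgnn u hu) (by linarith [hwle u])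
    have hint3 : 0 ≤ (|beta| + beta) * δ :=
      mul_nonneg (by linarith [neg_abs_le beta]) hδpos.le
    have hb3 : |beta| * δ = (|beta| * sδ) * sδ := by rw [hδ]; ring
    nlinarith [hI, hb2, hint1, hint2, hint3, hb3]
  have hVd : ∀ u ∈ Set.Ioo t0 T, HasDerivAt V (beta * V u + (g u + |beta| * sδ)) u := by
    intro u hu
    have hsub : Set.Icc t0 u ⊆ Set.Icc t0 T := Set.Icc_subset_Icc le_rfl hu.2.le
    have hqint : IntervalIntegrable q volume t0 u := by
      apply ContinuousOn.intervalIntegrable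
      rw [Set.uIcc_of_le hu.1.le]
      exact hqcont.mono hsub
    have hmeas : StronglyMeasurableAtFilter q (nhds u) volume :=
      (hqcont.mono Set.Ioo_subset_Icc_self).stronglyMeasurableAtFilter isOpen_Ioo u hu
    have hcont : ContinuousAt q u := hqcont.continuousAt (Icc_mem_nhds hu.1 hu.2)
    have hInt := intervalIntegral.integral_hasDerivAt_right hqint hmeas hcont
    have hexp : HasDerivAt (fun x => Real.exp (beta * x)) (Real.exp (beta * u) * beta) u := by
      simpa using ((hasDerivAt_id u).const_mul beta).exp
    have hprod := hexp.mul ((hInt.const_add (sδ * Real.exp (-(beta * t0)))))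
    have heq : Real.exp (beta * u) * q u = g u + |beta| * sδ := by
      rw [hq, ← mul_assoc, ← Real.exp_add, show beta * u + -(beta * u) = 0 by ring,
        Real.exp_zero, one_mul]
    have : HasDerivAt V
        (Real.exp (beta * u) * beta * (sδ * Real.exp (-(beta * t0)) + ∫ s in t0..u, q s)
          + Real.exp (beta * u) * q u) u := hprod
    convert this using 1
    rw [heq, hV]
    ring
  -- continuity of V, m, φ
  have hVc : ContinuousOn V (Set.Icc t0 T) := by
    apply ContinuousOn.mul
    · exact (Real.continuous_exp.comp (continuous_const.mul continuous_id)).continuousOn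
    · apply ContinuousOn.add continuousOn_const
      have hio : MeasureTheory.IntegrableOn q (Set.uIcc t0 T) volume := by
        rw [Set.uIcc_of_le hT]
        exact hqcont.integrableOn_compact isCompact_Icc
      have := intervalIntegral.continuousOn_primitive_interval hio
      rwa [Set.uIcc_of_le hT] at this
  have hmc : ContinuousOn m (Set.Icc t0 T) :=
    Real.continuous_sqrt.comp_continuousOn ((hwc.inner hwc).add continuousOn_const)
  have hφc : ContinuousOn φ (Set.Icc t0 T) :=
    ((Real.continuous_exp.comp (continuous_const.mul continuous_id).neg).continuousOn).mul
      (hmc.sub hVc)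
  have hφdd : ∀ u ∈ Set.Ioo t0 T, HasDerivAt φ
      (Real.exp (-(beta * u)) * (-beta) * (m u - V u)
        + Real.exp (-(beta * u)) *
          (((((inner ℝ (w u) (wd u) : ℝ) + (inner ℝ (wd u) (w u) : ℝ)) + 0) / (2 * m u))
            - (beta * V u + (g u + |beta| * sδ)))) u := by
    intro u hu
    have h1 : HasDerivAt (fun x => Real.exp (-(beta * x))) (Real.exp (-(beta * u)) * (-beta)) u := by
      simpa using (((hasDerivAt_id u).const_mul beta).neg).exp
    exact h1.mul ((hmd u (Set.Ioo_subset_Icc_self hu)).sub (hVd u hu))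
  have hanti : AntitoneOn φ (Set.Icc t0 T) := by
    apply antitoneOn_of_deriv_nonpos (convex_Icc _ _) hφc
    · rw [interior_Icc]
      exact fun u hu => ((hφdd u hu).differentiableAt).differentiableWithinAt
    · rw [interior_Icc]
      intro u hu
      rw [(hφdd u hu).deriv]
      have hb := hmd_le u (Set.Ioo_subset_Icc_self hu)
      have hexppos := Real.exp_pos (-(beta * u))
      have hkey : 0 ≤ Real.exp (-(beta * u)) *
          ((beta * m u + (g u + |beta| * sδ))
            - ((((inner ℝ (w u) (wd u) : ℝ) + (inner ℝ (wd u) (w u) : ℝ)) + 0) / (2 * m u))) :=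
        mul_nonneg hexppos.le (by linarith)
      nlinarith [hkey]
  have hφt : φ t ≤ φ t0 := hanti (Set.left_mem_Icc.mpr hT) ⟨ht0, htT⟩ ht0
  have hm0 : m t0 = sδ := by
    show Real.sqrt ((inner ℝ (w t0) (w t0) : ℝ) + δ) = sδ
    rw [hw0]
    simpa using hsqrtδ
  have hV0 : V t0 = sδ := by
    show Real.exp (beta * t0) * (sδ * Real.exp (-(beta * t0)) + ∫ s in t0..t0, q s) = sδ
    rw [intervalIntegral.integral_same, add_zero,
      show Real.exp (beta * t0) * (sδ * Real.exp (-(beta * t0)))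
        = sδ * Real.exp (beta * t0 + -(beta * t0)) from by rw [Real.exp_add]; ring]
    simp
  have hφt0 : φ t0 = 0 := by
    show Real.exp (-(beta * t0)) * (m t0 - V t0) = 0
    rw [hm0, hV0]; simp
  have hmtVt : m t ≤ V t := by
    have hφt' : Real.exp (-(beta * t)) * (m t - V t) ≤ 0 := le_of_le_of_eq hφt hφt0
    nlinarith [Real.exp_pos (-(beta * t)), hφt']
  have hVt_le : V t ≤ (∫ s in t0..t, Real.exp (beta * (t - s)) * g s) + ε := by
    have hsub : Set.Icc t0 t ⊆ Set.Icc t0 T := Set.Icc_subset_Icc le_rfl htT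
    have hgci : ContinuousOn g (Set.Icc t0 t) := hg.mono hsub
    have hexpc : Continuous fun s : ℝ => Real.exp (beta * (t - s)) :=
      Real.continuous_exp.comp (continuous_const.mul (continuous_const.sub continuous_id))
    have hIg : IntervalIntegrable (fun s => Real.exp (beta * (t - s)) * g s) volume t0 t := by
      apply ContinuousOn.intervalIntegrable
      rw [Set.uIcc_of_le ht0]
      exact hexpc.continuousOn.mul hgci
    have hIe : IntervalIntegrable (fun s => Real.exp (beta * (t - s))) volume t0 t :=
      Continuous.intervalIntegrable hexpc _ _
    have hVt : V t = sδ * Real.exp (beta * (t - t0))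
        + ((∫ s in t0..t, Real.exp (beta * (t - s)) * g s)
          + |beta| * sδ * (∫ s in t0..t, Real.exp (beta * (t - s)))) := by
      show Real.exp (beta * t) * (sδ * Real.exp (-(beta * t0)) + ∫ s in t0..t, q s) = _
      rw [mul_add]
      congr 1
      · rw [show Real.exp (beta * t) * (sδ * Real.exp (-(beta * t0)))
            = sδ * Real.exp (beta * t + -(beta * t0)) from by rw [Real.exp_add]; ring]
        rw [show beta * t + -(beta * t0) = beta * (t - t0) by ring]
      · calc Real.exp (beta * t) * ∫ s in t0..t, q s
            = ∫ s in t0..t, (Real.exp (beta * (t - s)) * g s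
                + |beta| * sδ * Real.exp (beta * (t - s))) := by
              rw [← intervalIntegral.integral_const_mul]
              apply intervalIntegral.integral_congr
              intro s _
              show Real.exp (beta * t) * (Real.exp (-(beta * s)) * (g s + |beta| * sδ)) = _
              rw [show Real.exp (beta * t) * (Real.exp (-(beta * s)) * (g s + |beta| * sδ))
                  = Real.exp (beta * t + -(beta * s)) * (g s + |beta| * sδ) from by
                    rw [Real.exp_add]; ring,
                show beta * t + -(beta * s) = beta * (t - s) by ring]
              ring
          _ = (∫ s in t0..t, Real.exp (beta * (t - s)) * g s)
              + |beta| * sδ * (∫ s in t0..t, Real.exp (beta * (t - s))) := by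
              rw [intervalIntegral.integral_add hIg (hIe.const_mul _),
                intervalIntegral.integral_const_mul]
    have hbd1 : sδ * Real.exp (beta * (t - t0)) ≤ sδ * Eb := by
      apply mul_le_mul_of_nonneg_left _ hsδpos.le
      apply Real.exp_le_exp.mpr
      calc beta * (t - t0) ≤ |beta| * (t - t0) :=
            mul_le_mul_of_nonneg_right (le_abs_self _) (by linarith)
        _ ≤ |beta| * (T - t0) := mul_le_mul_of_nonneg_left (by linarith) (abs_nonneg _)
    have hbd2 : (∫ s in t0..t, Real.exp (beta * (t - s))) ≤ (T - t0) * Eb := by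
      calc (∫ s in t0..t, Real.exp (beta * (t - s))) ≤ ∫ _s in t0..t, Eb := by
            apply intervalIntegral.integral_mono_on ht0 hIe intervalIntegrable_const
            intro s hs
            apply Real.exp_le_exp.mpr
            calc beta * (t - s) ≤ |beta| * (t - s) :=
                  mul_le_mul_of_nonneg_right (le_abs_self _) (by linarith [hs.2])
              _ ≤ |beta| * (T - t0) :=
                  mul_le_mul_of_nonneg_left (by linarith [hs.1, hs.2]) (abs_nonneg _)
        _ = (t - t0) * Eb := by rw [intervalIntegral.integral_const]; simp [smul_eq_mul]
        _ ≤ (T - t0) * Eb := mul_le_mul_of_nonneg_right (by linarith) hEbpos.le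
    have hWnn : (0:ℝ) ≤ |beta| * sδ := mul_nonneg (abs_nonneg _) hsδpos.le
    have hmul2 := mul_le_mul_of_nonneg_left hbd2 hWnn
    have hεeq2 : sδ * Eb + |beta| * sδ * ((T - t0) * Eb) = ε := by
      rw [show sδ * Eb + |beta| * sδ * ((T - t0) * Eb)
          = sδ * (Eb * (1 + |beta| * (T - t0))) by ring, ← hK, hsδ]
      field_simp
    rw [hVt]
    linarith [hbd1, hmul2, hεeq2]
  calc ‖w t‖ ≤ m t := hwle t
    _ ≤ V t := hmtVt
    _ ≤ _ := hVt_le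


/-- a priori error estimate for the gradient-preserving hyper-reduction,
for a fixed parameter. -/
theorem stmt_6 (t0 T : ℝ) (ht : t0 < T) (N k d m : ℕ)
    (hN : 0 < N) (hk : 0 < k) (hd : 0 < d) (hm : 0 < m)
    (L : Matrix (Fin N ⊕ Fin N) (Fin N ⊕ Fin N) ℝ)
    (f : EuclideanSpace ℝ (Fin N ⊕ Fin N))
    (c : EuclideanSpace ℝ (Fin d))
    (G : EuclideanSpace ℝ (Fin N ⊕ Fin N) → EuclideanSpace ℝ (Fin d))
    (JG : EuclideanSpace ℝ (Fin N ⊕ Fin N) → Matrix (Fin d) (Fin N ⊕ Fin N) ℝ)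
    (hG : ∀ x, HasFDerivAt G (toCLM (JG x)) x) (hJGcont : Continuous JG)
    (A : Matrix (Fin N ⊕ Fin N) (Fin k ⊕ Fin k) ℝ)
    (hA1 : Aᵀ * A = 1) (hA2 : Aᵀ * Jmat N * A = Jmat k)
    (U : Matrix (Fin d) (Fin m) ℝ) (hU : Uᵀ * U = 1)
    (P : Matrix (Fin d) (Fin m) ℝ) (hP : IsSelection P) (hPU : IsUnit (Pᵀ * U))
    (DP : Matrix (Fin d) (Fin d) ℝ) (hDP : DP = U * (Pᵀ * U)⁻¹ * Pᵀ)
    (y : ℝ → EuclideanSpace ℝ (Fin N ⊕ Fin N))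
    (zh : ℝ → EuclideanSpace ℝ (Fin k ⊕ Fin k))
    (hy : ∀ t ∈ Set.Icc t0 T,
      HasDerivAt y (mulVecE (Jmat N) (mulVecE L (y t) + f + mulVecE (JG (y t))ᵀ c)) t)
    (hz : ∀ t ∈ Set.Icc t0 T,
      HasDerivAt zh (mulVecE (Jmat k)
        (mulVecE (Aᵀ * L * A) (zh t) + mulVecE Aᵀ f
          + mulVecE (Aᵀ * (JG (mulVecE A (zh t)))ᵀ * DPᵀ) c)) t)
    (hz0 : zh t0 = mulVecE Aᵀ (y t0))
    (Lh LG mu : ℝ)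
    (hLh : ∀ x x' : EuclideanSpace ℝ (Fin N ⊕ Fin N),
      ‖mulVecE (JG x)ᵀ c - mulVecE (JG x')ᵀ c‖ ≤ Lh * ‖x - x'‖)
    (hLG : ∀ x x' : EuclideanSpace ℝ (Fin N ⊕ Fin N),
      specNorm (JG x - JG x') ≤ LG * ‖x - x'‖)
    (hmu : ∀ x : EuclideanSpace ℝ (Fin N ⊕ Fin N),
      (inner ℝ x (mulVecE (Jmat N * L) x) : ℝ) ≤ mu * ‖x‖ ^ 2)
    (alpha beta C : ℝ)
    (halpha : alpha = specNorm (Aᵀ * (Jmat N * L)) + Lh)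
    (hbeta : beta = mu + LG * specNorm ((Pᵀ * U)⁻¹) * ‖c‖)
    (hC : C = if beta ≠ 0 then (Real.exp (2 * beta * (T - t0)) - 1) / beta
              else 2 * (T - t0)) :
    (∫ t in t0..T, ‖y t - mulVecE A (zh t)‖ ^ 2)
      ≤ ((T - t0) * C * alpha ^ 2 + 1) * (∫ t in t0..T, ‖y t - mulVecE (A * Aᵀ) (y t)‖ ^ 2)
        + (T - t0) * ‖c‖ ^ 2 * C *
            (∫ t in t0..T, (specNorm ((1 - DP) * JG (mulVecE (A * Aᵀ) (y t)) * A)) ^ 2) := by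
  have hTt : t0 ≤ T := ht.le
  have hAtJ : Aᵀ * Jmat N = Jmat k * Aᵀ := AtJ_eq_JkAt hA1 hA2
  have hJtA : (Jmat N)ᵀ * A = A * (Jmat k)ᵀ := JtA_eq hA1 hA2
  have hPP : Pᵀ * P = 1 := selection_tr_mul hP
  have hkPU0 : (0:ℝ) ≤ specNorm ((Pᵀ * U)⁻¹) := specNorm_nonneg _
  have hDPs : specNorm DP ≤ specNorm ((Pᵀ * U)⁻¹) := by
    rw [hDP]
    have h1 := specNorm_mul_le (U * (Pᵀ * U)⁻¹) Pᵀ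
    have h2 := specNorm_mul_le U ((Pᵀ * U)⁻¹)
    have hUn : specNorm U ≤ 1 := specNorm_le_one_orth hU
    have hPn : specNorm Pᵀ ≤ 1 := by
      rw [specNorm_transpose]; exact specNorm_le_one_orth hPP
    have hU0 := specNorm_nonneg U
    have hP0 := specNorm_nonneg Pᵀ
    have hUP0 := specNorm_nonneg (U * (Pᵀ * U)⁻¹)
    nlinarith [specNorm_nonneg ((Pᵀ * U)⁻¹)]
  have hAs : specNorm A ≤ 1 := specNorm_le_one_orth hA1
  have hLh0 : 0 ≤ Lh := by
    set e0 : EuclideanSpace ℝ (Fin N ⊕ Fin N) :=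
      EuclideanSpace.single (Sum.inl (⟨0, hN⟩ : Fin N)) (1:ℝ) with he0
    have hvec := hLh e0 0
    have hn : ‖e0 - (0 : EuclideanSpace ℝ (Fin N ⊕ Fin N))‖ = 1 := by
      rw [sub_zero, he0, EuclideanSpace.norm_single]
      norm_num
    rw [hn, mul_one] at hvec
    exact le_trans (norm_nonneg _) hvec
  have halpha0 : 0 ≤ alpha := by
    rw [halpha]; exact add_nonneg (specNorm_nonneg _) hLh0
  set p : ℝ → EuclideanSpace ℝ (Fin N ⊕ Fin N) :=
    fun t => y t - mulVecE (A * Aᵀ) (y t) with hpdef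
  set w : ℝ → EuclideanSpace ℝ (Fin k ⊕ Fin k) :=
    fun t => mulVecE Aᵀ (y t) - zh t with hwdef
  set sg : ℝ → ℝ :=
    fun t => specNorm ((1 - DP) * JG (mulVecE (A * Aᵀ) (y t)) * A) with hsgdef
  set g : ℝ → ℝ := fun t => alpha * ‖p t‖ + ‖c‖ * sg t with hgdef
  set wd : ℝ → EuclideanSpace ℝ (Fin k ⊕ Fin k) := fun t =>
    mulVecE Aᵀ (mulVecE (Jmat N) (mulVecE L (y t) + f + mulVecE (JG (y t))ᵀ c))
      - mulVecE (Jmat k) (mulVecE (Aᵀ * L * A) (zh t) + mulVecE Aᵀ f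
          + mulVecE (Aᵀ * (JG (mulVecE A (zh t)))ᵀ * DPᵀ) c) with hwddef
  have hwd : ∀ t ∈ Set.Icc t0 T, HasDerivAt w (wd t) t := fun t htI =>
    (hasDerivAt_mulVecE Aᵀ (hy t htI)).sub (hz t htI)
  -- vector decomposition identity
  have hvid : ∀ t : ℝ, y t - mulVecE A (zh t) = p t + mulVecE A (w t) := by
    intro t
    show y t - mulVecE A (zh t)
      = (y t - mulVecE (A * Aᵀ) (y t)) + mulVecE A (mulVecE Aᵀ (y t) - zh t)
    rw [mulVecE_sub, mulVecE_mulVecE]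
    abel
  have hxbAz : ∀ t : ℝ, mulVecE (A * Aᵀ) (y t) - mulVecE A (zh t) = mulVecE A (w t) := by
    intro t
    show _ = mulVecE A (mulVecE Aᵀ (y t) - zh t)
    rw [mulVecE_sub, mulVecE_mulVecE]
  -- rewrite of the reduced vector field
  have hzpart : ∀ t : ℝ,
      mulVecE (Jmat k) (mulVecE (Aᵀ * L * A) (zh t) + mulVecE Aᵀ f
          + mulVecE (Aᵀ * (JG (mulVecE A (zh t)))ᵀ * DPᵀ) c)
      = mulVecE Aᵀ (mulVecE (Jmat N) (mulVecE L (mulVecE A (zh t)) + f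
          + mulVecE (DP * JG (mulVecE A (zh t)))ᵀ c)) := by
    intro t
    simp only [mulVecE_add, ← mulVecE_mulVecE, Matrix.transpose_mul, ← Matrix.mul_assoc, hAtJ]
  have hwdalg : ∀ t : ℝ, wd t = mulVecE Aᵀ (mulVecE (Jmat N)
      ((mulVecE L (p t) + mulVecE L (mulVecE A (w t)))
        + ((mulVecE (JG (y t))ᵀ c - mulVecE (JG (mulVecE (A * Aᵀ) (y t)))ᵀ c)
          + mulVecE ((1 - DP) * JG (mulVecE (A * Aᵀ) (y t)))ᵀ c
          + mulVecE (DP * (JG (mulVecE (A * Aᵀ) (y t)) - JG (mulVecE A (zh t))))ᵀ c))) := by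
    intro t
    have ha : mulVecE ((1 - DP) * JG (mulVecE (A * Aᵀ) (y t)))ᵀ c
        = mulVecE (JG (mulVecE (A * Aᵀ) (y t)))ᵀ c
          - mulVecE (DP * JG (mulVecE (A * Aᵀ) (y t)))ᵀ c := by
      rw [Matrix.sub_mul, Matrix.one_mul, Matrix.transpose_sub, matSub_mulVecE]
    have hb : mulVecE (DP * (JG (mulVecE (A * Aᵀ) (y t)) - JG (mulVecE A (zh t))))ᵀ c
        = mulVecE (DP * JG (mulVecE (A * Aᵀ) (y t)))ᵀ c
          - mulVecE (DP * JG (mulVecE A (zh t)))ᵀ c := by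
      rw [Matrix.mul_sub, Matrix.transpose_sub, matSub_mulVecE]
    have hc2 : mulVecE L (p t) + mulVecE L (mulVecE A (w t))
        = mulVecE L (y t) - mulVecE L (mulVecE A (zh t)) := by
      rw [← mulVecE_add, ← mulVecE_sub, ← hvid t]
    show mulVecE Aᵀ (mulVecE (Jmat N) (mulVecE L (y t) + f + mulVecE (JG (y t))ᵀ c))
      - mulVecE (Jmat k) (mulVecE (Aᵀ * L * A) (zh t) + mulVecE Aᵀ f
          + mulVecE (Aᵀ * (JG (mulVecE A (zh t)))ᵀ * DPᵀ) c) = _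
    rw [hzpart t, ← mulVecE_sub Aᵀ, ← mulVecE_sub (Jmat N), ha, hb, hc2]
    congr 1
    congr 1
    abel
  -- pointwise inner product estimate
  have hinner : ∀ t ∈ Set.Icc t0 T,
      (inner ℝ (w t) (wd t) : ℝ) ≤ beta * ‖w t‖ ^ 2 + g t * ‖w t‖ := by
    intro t htI
    have hJk1 : ((Jmat k)ᵀ)ᵀ * (Jmat k)ᵀ = 1 := by
      rw [Matrix.transpose_transpose, Jmat_mul_tr]
    have hwJk : ‖mulVecE (Jmat k)ᵀ (w t)‖ = ‖w t‖ := norm_mulVecE_orth hJk1 _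
    -- the five terms
    have hb1 : (inner ℝ (mulVecE A (w t)) (mulVecE (Jmat N) (mulVecE L (p t))) : ℝ)
        ≤ specNorm (Aᵀ * (Jmat N * L)) * ‖p t‖ * ‖w t‖ := by
      rw [← mulVecE_mulVecE, inner_mulVecE_left, ← mulVecE_mulVecE]
      calc (inner ℝ (w t) (mulVecE (Aᵀ * (Jmat N * L)) (p t)) : ℝ)
          ≤ ‖w t‖ * ‖mulVecE (Aᵀ * (Jmat N * L)) (p t)‖ := real_inner_le_norm _ _
        _ ≤ ‖w t‖ * (specNorm (Aᵀ * (Jmat N * L)) * ‖p t‖) :=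
            mul_le_mul_of_nonneg_left (norm_mulVecE_le _ _) (norm_nonneg _)
        _ = specNorm (Aᵀ * (Jmat N * L)) * ‖p t‖ * ‖w t‖ := by ring
    have hb2 : (inner ℝ (mulVecE A (w t)) (mulVecE (Jmat N) (mulVecE L (mulVecE A (w t)))) : ℝ)
        ≤ mu * ‖w t‖ ^ 2 := by
      rw [← mulVecE_mulVecE]
      have h := hmu (mulVecE A (w t))
      rwa [norm_mulVecE_orth hA1] at h
    have hb3 : (inner ℝ (mulVecE A (w t))
          (mulVecE (Jmat N) (mulVecE (JG (y t))ᵀ c - mulVecE (JG (mulVecE (A * Aᵀ) (y t)))ᵀ c)) : ℝ)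
        ≤ Lh * ‖p t‖ * ‖w t‖ := by
      calc (inner ℝ (mulVecE A (w t))
            (mulVecE (Jmat N) (mulVecE (JG (y t))ᵀ c - mulVecE (JG (mulVecE (A * Aᵀ) (y t)))ᵀ c)) : ℝ)
          ≤ ‖mulVecE A (w t)‖ * ‖mulVecE (Jmat N)
              (mulVecE (JG (y t))ᵀ c - mulVecE (JG (mulVecE (A * Aᵀ) (y t)))ᵀ c)‖ :=
            real_inner_le_norm _ _
        _ = ‖w t‖ * ‖mulVecE (JG (y t))ᵀ c - mulVecE (JG (mulVecE (A * Aᵀ) (y t)))ᵀ c‖ := by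
            rw [norm_mulVecE_orth hA1, norm_mulVecE_orth (Jmat_tr_mul N)]
        _ ≤ ‖w t‖ * (Lh * ‖y t - mulVecE (A * Aᵀ) (y t)‖) :=
            mul_le_mul_of_nonneg_left (hLh (y t) (mulVecE (A * Aᵀ) (y t))) (norm_nonneg _)
        _ = Lh * ‖p t‖ * ‖w t‖ := by
            have : y t - mulVecE (A * Aᵀ) (y t) = p t := rfl
            rw [this]; ring
    have hb4 : (inner ℝ (mulVecE A (w t))
          (mulVecE (Jmat N) (mulVecE ((1 - DP) * JG (mulVecE (A * Aᵀ) (y t)))ᵀ c)) : ℝ)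
        ≤ ‖c‖ * sg t * ‖w t‖ := by
      rw [← mulVecE_mulVecE (Jmat N) ((1 - DP) * JG (mulVecE (A * Aᵀ) (y t)))ᵀ c,
        real_inner_comm, inner_mulVecE_left, Matrix.transpose_mul, Matrix.transpose_transpose,
        mulVecE_mulVecE ((1 - DP) * JG (mulVecE (A * Aᵀ) (y t))) ((Jmat N)ᵀ),
        ← mulVecE_mulVecE ((Jmat N)ᵀ) A, hJtA,
        mulVecE_mulVecE A ((Jmat k)ᵀ) (w t),
        ← mulVecE_mulVecE ((1 - DP) * JG (mulVecE (A * Aᵀ) (y t))) A]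
      calc (inner ℝ c (mulVecE ((1 - DP) * JG (mulVecE (A * Aᵀ) (y t)) * A)
              (mulVecE (Jmat k)ᵀ (w t))) : ℝ)
          ≤ ‖c‖ * ‖mulVecE ((1 - DP) * JG (mulVecE (A * Aᵀ) (y t)) * A)
              (mulVecE (Jmat k)ᵀ (w t))‖ := real_inner_le_norm _ _
        _ ≤ ‖c‖ * (sg t * ‖mulVecE (Jmat k)ᵀ (w t)‖) :=
            mul_le_mul_of_nonneg_left (norm_mulVecE_le _ _) (norm_nonneg _)
        _ = ‖c‖ * sg t * ‖w t‖ := by rw [hwJk]; ring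
    have hΔ : specNorm (JG (mulVecE (A * Aᵀ) (y t)) - JG (mulVecE A (zh t)))
        ≤ LG * ‖w t‖ := by
      have h := hLG (mulVecE (A * Aᵀ) (y t)) (mulVecE A (zh t))
      rwa [hxbAz t, norm_mulVecE_orth hA1] at h
    have hs5 : specNorm (DP * (JG (mulVecE (A * Aᵀ) (y t)) - JG (mulVecE A (zh t))) * A)
        ≤ specNorm ((Pᵀ * U)⁻¹) * (LG * ‖w t‖) := by
      calc specNorm (DP * (JG (mulVecE (A * Aᵀ) (y t)) - JG (mulVecE A (zh t))) * A)
          ≤ specNorm (DP * (JG (mulVecE (A * Aᵀ) (y t)) - JG (mulVecE A (zh t)))) * specNorm A :=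
            specNorm_mul_le _ _
        _ ≤ specNorm (DP * (JG (mulVecE (A * Aᵀ) (y t)) - JG (mulVecE A (zh t)))) :=
            mul_le_of_le_one_right (specNorm_nonneg _) hAs
        _ ≤ specNorm DP * specNorm (JG (mulVecE (A * Aᵀ) (y t)) - JG (mulVecE A (zh t))) :=
            specNorm_mul_le _ _
        _ ≤ specNorm ((Pᵀ * U)⁻¹) * (LG * ‖w t‖) :=
            mul_le_mul hDPs hΔ (specNorm_nonneg _) hkPU0
    have hb5 : (inner ℝ (mulVecE A (w t))
          (mulVecE (Jmat N) (mulVecE (DP * (JG (mulVecE (A * Aᵀ) (y t))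
            - JG (mulVecE A (zh t))))ᵀ c)) : ℝ)
        ≤ ‖c‖ * (specNorm ((Pᵀ * U)⁻¹) * (LG * ‖w t‖)) * ‖w t‖ := by
      rw [← mulVecE_mulVecE (Jmat N)
          (DP * (JG (mulVecE (A * Aᵀ) (y t)) - JG (mulVecE A (zh t))))ᵀ c,
        real_inner_comm, inner_mulVecE_left, Matrix.transpose_mul, Matrix.transpose_transpose,
        mulVecE_mulVecE (DP * (JG (mulVecE (A * Aᵀ) (y t)) - JG (mulVecE A (zh t)))) ((Jmat N)ᵀ),
        ← mulVecE_mulVecE ((Jmat N)ᵀ) A, hJtA,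
        mulVecE_mulVecE A ((Jmat k)ᵀ) (w t),
        ← mulVecE_mulVecE (DP * (JG (mulVecE (A * Aᵀ) (y t)) - JG (mulVecE A (zh t)))) A]
      calc (inner ℝ c (mulVecE (DP * (JG (mulVecE (A * Aᵀ) (y t)) - JG (mulVecE A (zh t))) * A)
              (mulVecE (Jmat k)ᵀ (w t))) : ℝ)
          ≤ ‖c‖ * ‖mulVecE (DP * (JG (mulVecE (A * Aᵀ) (y t)) - JG (mulVecE A (zh t))) * A)
              (mulVecE (Jmat k)ᵀ (w t))‖ := real_inner_le_norm _ _
        _ ≤ ‖c‖ * (specNorm (DP * (JG (mulVecE (A * Aᵀ) (y t)) - JG (mulVecE A (zh t))) * A)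
              * ‖mulVecE (Jmat k)ᵀ (w t)‖) :=
            mul_le_mul_of_nonneg_left (norm_mulVecE_le _ _) (norm_nonneg _)
        _ ≤ ‖c‖ * (specNorm ((Pᵀ * U)⁻¹) * (LG * ‖w t‖) * ‖w t‖) := by
            rw [hwJk]
            apply mul_le_mul_of_nonneg_left _ (norm_nonneg c)
            exact mul_le_mul_of_nonneg_right hs5 (norm_nonneg _)
        _ = ‖c‖ * (specNorm ((Pᵀ * U)⁻¹) * (LG * ‖w t‖)) * ‖w t‖ := by ring
    -- combine
    have hsum : (inner ℝ (w t) (wd t) : ℝ)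
        = (inner ℝ (mulVecE A (w t)) (mulVecE (Jmat N) (mulVecE L (p t))) : ℝ)
          + (inner ℝ (mulVecE A (w t)) (mulVecE (Jmat N) (mulVecE L (mulVecE A (w t)))) : ℝ)
          + (inner ℝ (mulVecE A (w t)) (mulVecE (Jmat N)
              (mulVecE (JG (y t))ᵀ c - mulVecE (JG (mulVecE (A * Aᵀ) (y t)))ᵀ c)) : ℝ)
          + (inner ℝ (mulVecE A (w t)) (mulVecE (Jmat N)
              (mulVecE ((1 - DP) * JG (mulVecE (A * Aᵀ) (y t)))ᵀ c)) : ℝ)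
          + (inner ℝ (mulVecE A (w t)) (mulVecE (Jmat N)
              (mulVecE (DP * (JG (mulVecE (A * Aᵀ) (y t)) - JG (mulVecE A (zh t))))ᵀ c)) : ℝ) := by
      rw [hwdalg t, ← inner_mulVecE_left]
      simp only [mulVecE_add, inner_add_right]
      ring
    rw [hsum, hbeta]
    have hgt : g t = alpha * ‖p t‖ + ‖c‖ * sg t := rfl
    rw [hgt, halpha]
    nlinarith [hb1, hb2, hb3, hb4, hb5, norm_nonneg (w t), norm_nonneg (p t)]
  -- continuity facts
  have hycont : ContinuousOn y (Set.Icc t0 T) :=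
    fun s hs => ((hy s hs).continuousAt).continuousWithinAt
  have hpcont : ContinuousOn p (Set.Icc t0 T) :=
    hycont.sub ((toCLM (A * Aᵀ)).continuous.comp_continuousOn hycont)
  have hwcont : ContinuousOn w (Set.Icc t0 T) :=
    ((toCLM Aᵀ).continuous.comp_continuousOn hycont).sub
      (fun s hs => ((hz s hs).continuousAt).continuousWithinAt)
  have hsgcont : ContinuousOn sg (Set.Icc t0 T) := by
    have hmat : Continuous fun X : Matrix (Fin d) (Fin N ⊕ Fin N) ℝ => (1 - DP) * X * A :=
      (continuous_const.matrix_mul continuous_id).matrix_mul continuous_const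
    exact (continuous_specNorm.comp (hmat.comp hJGcont)).comp_continuousOn
      ((toCLM (A * Aᵀ)).continuous.comp_continuousOn hycont)
  have hgcont : ContinuousOn g (Set.Icc t0 T) :=
    (continuousOn_const.mul hpcont.norm).add (continuousOn_const.mul hsgcont)
  have hgnn : ∀ t ∈ Set.Icc t0 T, 0 ≤ g t := by
    intro t _
    exact add_nonneg (mul_nonneg halpha0 (norm_nonneg _))
      (mul_nonneg (norm_nonneg c) (specNorm_nonneg _))
  have hw0 : w t0 = 0 := by
    show mulVecE Aᵀ (y t0) - zh t0 = 0
    rw [hz0, sub_self]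
  -- Gronwall
  have hwB := gronwall_L2 hTt hwd hw0 hgcont hgnn hinner
  -- quadratic bound on each ‖w t‖^2
  have hIg2 : IntervalIntegrable (fun s => g s ^ 2) MeasureTheory.volume t0 T := by
    apply ContinuousOn.intervalIntegrable
    rw [Set.uIcc_of_le hTt]
    exact hgcont.pow 2
  have hItot0 : 0 ≤ ∫ s in t0..T, g s ^ 2 :=
    intervalIntegral.integral_nonneg hTt fun s _ => sq_nonneg _
  have hE2C : ∀ t ∈ Set.Icc t0 T, (∫ s in t0..t, Real.exp (2 * beta * (t - s))) ≤ C / 2 := by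
    intro t htI
    obtain ⟨ht0, htT⟩ := htI
    by_cases hb : beta = 0
    · rw [hC, if_neg (by simp [hb])]
      have heq1 : (∫ s in t0..t, Real.exp (2 * beta * (t - s))) = t - t0 := by
        calc (∫ s in t0..t, Real.exp (2 * beta * (t - s)))
            = ∫ _s in t0..t, (1:ℝ) := by
              apply intervalIntegral.integral_congr
              intro s _
              dsimp only
              rw [hb]
              norm_num
          _ = t - t0 := by simp
      rw [heq1]
      linarith
    · rw [integral_exp_decay (2 * beta) t0 t (mul_ne_zero two_ne_zero hb), hC, if_pos hb]
      rw [div_div]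
      rcases lt_or_gt_of_ne hb with hneg | hpos
      · have hle : Real.exp (2 * beta * (T - t0)) - 1 ≤ Real.exp (2 * beta * (t - t0)) - 1 := by
          have h1 : Real.exp (2 * beta * (T - t0)) ≤ Real.exp (2 * beta * (t - t0)) := by
            apply Real.exp_le_exp.mpr
            exact mul_le_mul_of_nonpos_left (by linarith) (by linarith : 2 * beta ≤ 0)
          linarith
        rw [show beta * 2 = 2 * beta from by ring, div_eq_mul_inv, div_eq_mul_inv]
        exact mul_le_mul_of_nonpos_right hle (inv_nonpos.mpr (by linarith))
      · have hle : Real.exp (2 * beta * (t - t0)) ≤ Real.exp (2 * beta * (T - t0)) := by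
          apply Real.exp_le_exp.mpr
          exact mul_le_mul_of_nonneg_left (by linarith) (by linarith : (0:ℝ) ≤ 2 * beta)
        calc (Real.exp (2 * beta * (t - t0)) - 1) / (2 * beta)
            ≤ (Real.exp (2 * beta * (T - t0)) - 1) / (2 * beta) :=
              (div_le_div_iff_of_pos_right (by linarith : (0:ℝ) < 2 * beta)).mpr
                (sub_le_sub_right hle 1)
          _ = (Real.exp (2 * beta * (T - t0)) - 1) / (beta * 2) := by ring_nf
  have hC2nn : 0 ≤ C / 2 := by
    refine le_trans ?_ (hE2C T (Set.right_mem_Icc.mpr hTt))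
    exact intervalIntegral.integral_nonneg hTt fun s _ => (Real.exp_pos _).le
  have hW2 : ∀ t ∈ Set.Icc t0 T, ‖w t‖ ^ 2 ≤ C / 2 * ∫ s in t0..T, g s ^ 2 := by
    intro t htI
    obtain ⟨ht0, htT⟩ := htI
    have hsub : Set.Icc t0 t ⊆ Set.Icc t0 T := Set.Icc_subset_Icc le_rfl htT
    have hexpc : ContinuousOn (fun s : ℝ => Real.exp (beta * (t - s))) (Set.Icc t0 t) :=
      (Real.continuous_exp.comp
        (continuous_const.mul (continuous_const.sub continuous_id))).continuousOn
    have hCS := integral_CS ht0 hexpc (hgcont.mono hsub)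
    have hWnn : 0 ≤ ∫ s in t0..t, Real.exp (beta * (t - s)) * g s := by
      apply intervalIntegral.integral_nonneg ht0
      intro s hs
      exact mul_nonneg (Real.exp_pos _).le (hgnn s (hsub hs))
    have hw1 : ‖w t‖ ^ 2 ≤ (∫ s in t0..t, Real.exp (beta * (t - s)) * g s) ^ 2 :=
      pow_le_pow_left₀ (norm_nonneg _) (hwB t ⟨ht0, htT⟩) 2
    have hF2eq : (∫ s in t0..t, Real.exp (beta * (t - s)) ^ 2)
        = ∫ s in t0..t, Real.exp (2 * beta * (t - s)) := by
      apply intervalIntegral.integral_congr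
      intro s _
      dsimp only
      rw [pow_two, ← Real.exp_add]
      congr 1
      ring
    have hE2nn : 0 ≤ ∫ s in t0..t, Real.exp (2 * beta * (t - s)) :=
      intervalIntegral.integral_nonneg ht0 fun s _ => (Real.exp_pos _).le
    have hG2 : (∫ s in t0..t, g s ^ 2) ≤ ∫ s in t0..T, g s ^ 2 := by
      apply intervalIntegral.integral_mono_interval le_rfl ht0 htT
      · exact MeasureTheory.ae_of_all _ fun s => sq_nonneg _
      · exact hIg2
    have hG2nn : 0 ≤ ∫ s in t0..t, g s ^ 2 :=
      intervalIntegral.integral_nonneg ht0 fun s _ => sq_nonneg _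
    calc ‖w t‖ ^ 2 ≤ (∫ s in t0..t, Real.exp (beta * (t - s)) * g s) ^ 2 := hw1
      _ ≤ (∫ s in t0..t, Real.exp (beta * (t - s)) ^ 2) * ∫ s in t0..t, g s ^ 2 := hCS
      _ ≤ (C / 2) * ∫ s in t0..T, g s ^ 2 := by
          rw [hF2eq]
          apply mul_le_mul (hE2C t ⟨ht0, htT⟩) hG2 hG2nn hC2nn
  -- integrability of the pieces
  have hIp : IntervalIntegrable (fun t => ‖p t‖ ^ 2) MeasureTheory.volume t0 T := by
    apply ContinuousOn.intervalIntegrable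
    rw [Set.uIcc_of_le hTt]
    exact hpcont.norm.pow 2
  have hIw : IntervalIntegrable (fun t => ‖w t‖ ^ 2) MeasureTheory.volume t0 T := by
    apply ContinuousOn.intervalIntegrable
    rw [Set.uIcc_of_le hTt]
    exact hwcont.norm.pow 2
  have hIsg : IntervalIntegrable (fun t => sg t ^ 2) MeasureTheory.volume t0 T := by
    apply ContinuousOn.intervalIntegrable
    rw [Set.uIcc_of_le hTt]
    exact hsgcont.pow 2
  -- orthogonal split of the error
  have hsplit : (∫ t in t0..T, ‖y t - mulVecE A (zh t)‖ ^ 2)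
      = (∫ t in t0..T, ‖p t‖ ^ 2) + ∫ t in t0..T, ‖w t‖ ^ 2 := by
    rw [← intervalIntegral.integral_add hIp hIw]
    apply intervalIntegral.integral_congr
    intro s _
    dsimp only
    have hAp : mulVecE Aᵀ (p s) = 0 := by
      show mulVecE Aᵀ (y s - mulVecE (A * Aᵀ) (y s)) = 0
      rw [mulVecE_sub, ← mulVecE_mulVecE, ← Matrix.mul_assoc, hA1, Matrix.one_mul, sub_self]
    have horth : (inner ℝ (p s) (mulVecE A (w s)) : ℝ) = 0 := by
      rw [real_inner_comm, inner_mulVecE_left, hAp, inner_zero_right]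
    rw [hvid s, norm_add_sq_real, horth, norm_mulVecE_orth hA1]
    ring
  -- integral bound for w
  have hwint : (∫ t in t0..T, ‖w t‖ ^ 2)
      ≤ (T - t0) * (C / 2 * ∫ s in t0..T, g s ^ 2) := by
    calc (∫ t in t0..T, ‖w t‖ ^ 2)
        ≤ ∫ _t in t0..T, (C / 2 * ∫ s in t0..T, g s ^ 2) := by
          apply intervalIntegral.integral_mono_on hTt hIw intervalIntegrable_const
          exact fun t htI => hW2 t htI
      _ = (T - t0) * (C / 2 * ∫ s in t0..T, g s ^ 2) := by
          rw [intervalIntegral.integral_const, smul_eq_mul]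
  -- bound for the g integral
  have hgint : (∫ s in t0..T, g s ^ 2)
      ≤ 2 * alpha ^ 2 * (∫ t in t0..T, ‖p t‖ ^ 2)
        + 2 * ‖c‖ ^ 2 * ∫ t in t0..T, sg t ^ 2 := by
    have hpt : (∫ s in t0..T, g s ^ 2)
        ≤ ∫ t in t0..T, (2 * alpha ^ 2 * ‖p t‖ ^ 2 + 2 * ‖c‖ ^ 2 * sg t ^ 2) := by
      apply intervalIntegral.integral_mono_on hTt hIg2
        ((hIp.const_mul _).add (hIsg.const_mul _))
      intro s _
      show (alpha * ‖p s‖ + ‖c‖ * sg s) ^ 2 ≤ _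
      nlinarith [sq_nonneg (alpha * ‖p s‖ - ‖c‖ * sg s)]
    calc (∫ s in t0..T, g s ^ 2)
        ≤ ∫ t in t0..T, (2 * alpha ^ 2 * ‖p t‖ ^ 2 + 2 * ‖c‖ ^ 2 * sg t ^ 2) := hpt
      _ = 2 * alpha ^ 2 * (∫ t in t0..T, ‖p t‖ ^ 2)
          + 2 * ‖c‖ ^ 2 * ∫ t in t0..T, sg t ^ 2 := by
          rw [intervalIntegral.integral_add (hIp.const_mul _) (hIsg.const_mul _),
            intervalIntegral.integral_const_mul, intervalIntegral.integral_const_mul]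
  -- rewrite the goal integrals
  have hIpg : (∫ t in t0..T, ‖y t - mulVecE (A * Aᵀ) (y t)‖ ^ 2)
      = ∫ t in t0..T, ‖p t‖ ^ 2 := by
    apply intervalIntegral.integral_congr
    intro s _
    rfl
  have hIsgg : (∫ t in t0..T, (specNorm ((1 - DP) * JG (mulVecE (A * Aᵀ) (y t)) * A)) ^ 2)
      = ∫ t in t0..T, sg t ^ 2 := by
    apply intervalIntegral.integral_congr
    intro s _
    rfl
  rw [hsplit, hIpg, hIsgg]
  have hfinal : (∫ t in t0..T, ‖w t‖ ^ 2)
      ≤ (T - t0) * C * alpha ^ 2 * (∫ t in t0..T, ‖p t‖ ^ 2)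
        + (T - t0) * ‖c‖ ^ 2 * C * (∫ t in t0..T, sg t ^ 2) := by
    calc (∫ t in t0..T, ‖w t‖ ^ 2)
        ≤ (T - t0) * (C / 2 * ∫ s in t0..T, g s ^ 2) := hwint
      _ ≤ (T - t0) * (C / 2 * (2 * alpha ^ 2 * (∫ t in t0..T, ‖p t‖ ^ 2)
            + 2 * ‖c‖ ^ 2 * ∫ t in t0..T, sg t ^ 2)) := by
          apply mul_le_mul_of_nonneg_left _ (by linarith : (0:ℝ) ≤ T - t0)
          exact mul_le_mul_of_nonneg_left hgint hC2nn
      _ = (T - t0) * C * alpha ^ 2 * (∫ t in t0..T, ‖p t‖ ^ 2)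
            + (T - t0) * ‖c‖ ^ 2 * C * (∫ t in t0..T, sg t ^ 2) := by ring
  linarith [hfinal]
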